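/- Let M be a generalized Eulerian A_n(K)-module which is finitely generated as an R-module. Then M = 0 or M ≅ R^m as graded R-modules for some m ≥ 1. -/

import Mathlib

/-! ### The Weyl algebra `A_n(K)` as a quotient of the free algebra. -/

/-- The defining relations of the `n`-th Weyl algebra: the `X_i` commute, the `∂_i` commute,
and `∂_i X_j = X_j ∂_i + δ_{ij}`. -/
inductive WeylRel (K : Type) [Field K] (n : ℕ) :
    FreeAlgebra K (Fin n ⊕ Fin n) → FreeAlgebra K (Fin n ⊕ Fin n) → Prop
  | xx (i j : Fin n) : WeylRel K n
      (FreeAlgebra.ι K (Sum.inl i) * FreeAlgebra.ι K (Sum.inl j))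
      (FreeAlgebra.ι K (Sum.inl j) * FreeAlgebra.ι K (Sum.inl i))
  | dd (i j : Fin n) : WeylRel K n
      (FreeAlgebra.ι K (Sum.inr i) * FreeAlgebra.ι K (Sum.inr j))
      (FreeAlgebra.ι K (Sum.inr j) * FreeAlgebra.ι K (Sum.inr i))
  | dx (i j : Fin n) : WeylRel K n
      (FreeAlgebra.ι K (Sum.inr i) * FreeAlgebra.ι K (Sum.inl j))
      (FreeAlgebra.ι K (Sum.inl j) * FreeAlgebra.ι K (Sum.inr i) + if i = j then 1 else 0)

/-- The `n`-th Weyl algebra over `K`. -/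
abbrev WeylAlgebra (K : Type) [Field K] (n : ℕ) : Type := RingQuot (WeylRel K n)

/-- The variable `X_i` (degree `+1`) in the Weyl algebra. -/
noncomputable def Wx (K : Type) [Field K] {n : ℕ} (i : Fin n) : WeylAlgebra K n :=
  RingQuot.mkAlgHom K (WeylRel K n) (FreeAlgebra.ι K (Sum.inl i))

/-- The partial derivative `∂_i` (degree `-1`) in the Weyl algebra. -/
noncomputable def Wd (K : Type) [Field K] {n : ℕ} (i : Fin n) : WeylAlgebra K n :=
  RingQuot.mkAlgHom K (WeylRel K n) (FreeAlgebra.ι K (Sum.inr i))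

/-- The Euler operator `ℰ_n = ∑ X_i ∂_i`. -/
noncomputable def weylEuler (K : Type) [Field K] (n : ℕ) : WeylAlgebra K n :=
  ∑ i : Fin n, Wx K i * Wd K i

/-- The Euler operator `ℰ_r = ∑_{i < r} X_i ∂_i` of the subalgebra `A_r(K) ⊆ A_n(K)`. -/
noncomputable def weylEulerUpTo (K : Type) [Field K] (n r : ℕ) : WeylAlgebra K n :=
  ∑ i ∈ Finset.univ.filter (fun i : Fin n => (i : ℕ) < r), Wx K i * Wd K i

/-- Monomials of degree `d` in the variables `X_1, …, X_n` inside the Weyl algebra. -/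
def xMonomials (K : Type) [Field K] (n d : ℕ) : Set (WeylAlgebra K n) :=
  {w | ∃ l : List (Fin n), l.length = d ∧ w = (l.map (Wx K)).prod}

/-- `f` is a homogeneous polynomial of degree `d` in `R = K[X_1, …, X_n] ⊆ A_n(K)`. -/
def IsHomogPoly (K : Type) [Field K] {n : ℕ} (f : WeylAlgebra K n) (d : ℕ) : Prop :=
  f ∈ Submodule.span K (xMonomials K n d)

/-! ### Graded (left) modules over the Weyl algebra. -/

/-- A graded left `A_n(K)`-module: a module over the Weyl algebra together with an internal
`ℤ`-grading, stable under `K` and such that `X_i` raises degree by one and `∂_i` lowers it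
by one. -/
structure GWM (K : Type) [Field K] (n : ℕ) where
  carrier : Type
  [acg : AddCommGroup carrier]
  [mod : Module (WeylAlgebra K n) carrier]
  deg : ℤ → AddSubgroup carrier
  isInternal : DirectSum.IsInternal deg
  k_smul : ∀ (c : K) (j : ℤ) (m : carrier), m ∈ deg j →
    algebraMap K (WeylAlgebra K n) c • m ∈ deg j
  x_smul : ∀ (i : Fin n) (j : ℤ) (m : carrier), m ∈ deg j → Wx K i • m ∈ deg (j + 1)
  d_smul : ∀ (i : Fin n) (j : ℤ) (m : carrier), m ∈ deg j → Wd K i • m ∈ deg (j - 1)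

attribute [instance] GWM.acg GWM.mod

instance {K : Type} [Field K] {n : ℕ} : CoeSort (GWM K n) Type := ⟨GWM.carrier⟩

/-- A graded `A_n(K)`-module is *generalized Eulerian* if every homogeneous element `z`
is killed by some power of `ℰ_n - |z|`. -/
def GWM.IsGenEulerian {K : Type} [Field K] {n : ℕ} (M : GWM K n) : Prop :=
  ∀ (j : ℤ) (m : M.carrier), m ∈ M.deg j →
    ∃ a : ℕ, 1 ≤ a ∧ ((weylEuler K n - (j : WeylAlgebra K n)) ^ a) • m = 0

/-- A graded module is concentrated in degree `d` if all other graded pieces vanish. -/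
def GWM.ConcentratedIn {K : Type} [Field K] {n : ℕ} (M : GWM K n) (d : ℤ) : Prop :=
  ∀ j : ℤ, j ≠ d → M.deg j = ⊥

/-- The polynomial subring `R = K[X_1, …, X_n]` of the Weyl algebra, as a subset. -/
def RpolySet (K : Type) [Field K] (n : ℕ) : Set (WeylAlgebra K n) :=
  (Algebra.adjoin K (Set.range fun i : Fin n => Wx K i) : Subalgebra K (WeylAlgebra K n))

namespace WeylProof

set_option synthInstance.maxHeartbeats 1000000
set_option maxHeartbeats 1000000

variable {K : Type} [Field K] {n : ℕ}

/-- homogeneous polynomials of degree `d` as a `K`-submodule. -/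
noncomputable abbrev Pd (K : Type) [Field K] (n d : ℕ) : Submodule K (WeylAlgebra K n) :=
  Submodule.span K (xMonomials K n d)

lemma wx_comm (i j : Fin n) : Wx K i * Wx K j = Wx K j * Wx K i := by
  have := RingQuot.mkAlgHom_rel K (WeylRel.xx (K := K) (n := n) i j)
  simpa [Wx, map_mul] using this

lemma wd_wx (i j : Fin n) :
    Wd K i * Wx K j = Wx K j * Wd K i + if i = j then 1 else 0 := by
  have := RingQuot.mkAlgHom_rel K (WeylRel.dx (K := K) (n := n) i j)
  rw [map_mul, map_add, map_mul, apply_ite (RingQuot.mkAlgHom K (WeylRel K n)),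
    map_one, map_zero] at this
  simpa [Wx, Wd] using this

lemma mono_mem (l : List (Fin n)) : (l.map (Wx K)).prod ∈ Pd K n l.length :=
  Submodule.subset_span ⟨l, rfl, rfl⟩

lemma x_mul_mem {d : ℕ} (i : Fin n) {f : WeylAlgebra K n} (hf : f ∈ Pd K n d) :
    Wx K i * f ∈ Pd K n (d + 1) := by
  induction hf using Submodule.span_induction with
  | mem x hx =>
    obtain ⟨l, hl, rfl⟩ := hx
    have : Wx K i * (l.map (Wx K)).prod = ((i :: l).map (Wx K)).prod := by simp
    rw [this]
    have := mono_mem (K := K) (i :: l)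
    simpa [hl] using this
  | zero => simpa using (Pd K n (d + 1)).zero_mem
  | add x y _ _ hx hy => rw [mul_add]; exact add_mem hx hy
  | smul c x _ hx => rw [mul_smul_comm]; exact Submodule.smul_mem _ _ hx

lemma Pd_zero_eq {f : WeylAlgebra K n} (hf : f ∈ Pd K n 0) :
    ∃ c : K, f = algebraMap K (WeylAlgebra K n) c := by
  have hset : xMonomials K n 0 = {(1 : WeylAlgebra K n)} := by
    ext w
    constructor
    · rintro ⟨l, hl, rfl⟩
      rw [List.length_eq_zero_iff] at hl
      simp [hl]
    · rintro rfl
      exact ⟨[], rfl, rfl⟩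
  have hf' : f ∈ Submodule.span K (xMonomials K n 0) := hf
  rw [hset, Submodule.mem_span_singleton] at hf'
  obtain ⟨c, rfl⟩ := hf'
  exact ⟨c, by rw [Algebra.algebraMap_eq_smul_one]⟩

lemma one_mem_Pd_zero : (1 : WeylAlgebra K n) ∈ Pd K n 0 :=
  Submodule.subset_span ⟨[], rfl, rfl⟩

/-- derivative and Euler identity for monomials. -/
lemma list_deriv (l : List (Fin n)) :
    ∃ g : Fin n → WeylAlgebra K n,
      (∀ i, g i ∈ Pd K n (l.length - 1)) ∧
      (∀ i, Wd K i * (l.map (Wx K)).prod = (l.map (Wx K)).prod * Wd K i + g i) ∧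
      (∑ i, Wx K i * g i = l.length • (l.map (Wx K)).prod) ∧
      (l = [] → g = 0) := by
  induction l with
  | nil =>
    refine ⟨0, by simp, by simp, by simp, fun _ => rfl⟩
  | cons a t ih =>
    obtain ⟨g, hmem, hcomm, heuler, hnil⟩ := ih
    refine ⟨fun i => Wx K a * g i + if i = a then (t.map (Wx K)).prod else 0, ?_, ?_, ?_, by simp⟩
    · intro i
      rcases eq_or_ne t [] with rfl | ht
      · simp only [hnil rfl, Pi.zero_apply, mul_zero, zero_add]
        rcases eq_or_ne i a with rfl | hia
        · simpa using one_mem_Pd_zero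
        · simp only [if_neg hia]
          exact (Pd K n _).zero_mem
      · have hlen : t.length - 1 + 1 = t.length := by
          have : 1 ≤ t.length := List.length_pos_iff.mpr ht
          omega
        apply add_mem
        · have := x_mul_mem a (hmem i)
          rw [hlen] at this
          simpa using this
        · rcases eq_or_ne i a with rfl | hia
          · simpa using mono_mem (K := K) t
          · simp only [if_neg hia]
            exact (Pd K n _).zero_mem
    · intro i
      have : ((a :: t).map (Wx K)).prod = Wx K a * (t.map (Wx K)).prod := by simp
      rw [this, ← mul_assoc, wd_wx, add_mul, mul_assoc, hcomm i, mul_add, ite_mul, one_mul,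
        zero_mul]
      rw [← mul_assoc]
      abel
    · have hprod : ((a :: t).map (Wx K)).prod = Wx K a * (t.map (Wx K)).prod := by simp
      rw [hprod]
      have h1 : ∀ i : Fin n, Wx K i * (Wx K a * g i + if i = a then (t.map (Wx K)).prod else 0)
          = Wx K a * (Wx K i * g i) + (if i = a then Wx K i * (t.map (Wx K)).prod else 0) := by
        intro i
        rw [mul_add, ← mul_assoc, wx_comm i a, mul_assoc, mul_ite, mul_zero]
      simp only [h1]
      rw [Finset.sum_add_distrib, ← Finset.mul_sum, heuler, Finset.sum_ite_eq' Finset.univ a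
        (fun i => Wx K i * (t.map (Wx K)).prod), if_pos (Finset.mem_univ a)]
      rw [mul_smul_comm, List.length_cons, succ_nsmul]

lemma poly_deriv {d : ℕ} {f : WeylAlgebra K n} (hf : f ∈ Pd K n d) :
    ∃ g : Fin n → WeylAlgebra K n,
      (∀ i, g i ∈ Pd K n (d - 1)) ∧
      (∀ i, Wd K i * f = f * Wd K i + g i) ∧
      (∑ i, Wx K i * g i = d • f) := by
  induction hf using Submodule.span_induction with
  | mem x hx =>
    obtain ⟨l, hl, rfl⟩ := hx
    obtain ⟨g, h1, h2, h3, _⟩ := list_deriv (K := K) l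
    exact ⟨g, by rw [← hl]; exact h1, h2, by rw [← hl]; exact h3⟩
  | zero => exact ⟨0, by simp, by simp, by simp⟩
  | add x y _ _ hx hy =>
    obtain ⟨g, hg1, hg2, hg3⟩ := hx
    obtain ⟨g', hg'1, hg'2, hg'3⟩ := hy
    refine ⟨g + g', fun i => add_mem (hg1 i) (hg'1 i), fun i => ?_, ?_⟩
    · simp only [Pi.add_apply, mul_add, add_mul, hg2 i, hg'2 i]; abel
    · simp only [Pi.add_apply, mul_add, Finset.sum_add_distrib, hg3, hg'3, smul_add]
  | smul c x _ hx =>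
    obtain ⟨g, hg1, hg2, hg3⟩ := hx
    refine ⟨c • g, fun i => Submodule.smul_mem _ _ (hg1 i), fun i => ?_, ?_⟩
    · simp only [Pi.smul_apply, mul_smul_comm, smul_mul_assoc, hg2 i, smul_add]
    · simp only [Pi.smul_apply, mul_smul_comm, ← Finset.smul_sum, hg3, smul_comm c]


lemma Pd_le_adjoin (d : ℕ) :
    Pd K n d ≤ Subalgebra.toSubmodule (Algebra.adjoin K (Set.range fun i : Fin n => Wx K i)) := by
  rw [Submodule.span_le]
  rintro w ⟨l, hl, rfl⟩
  simp only [SetLike.mem_coe, Subalgebra.mem_toSubmodule]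
  apply Subalgebra.list_prod_mem
  intro x hx
  obtain ⟨i, _, rfl⟩ := List.mem_map.mp hx
  exact Algebra.subset_adjoin ⟨i, rfl⟩

lemma mem_R_of_Pd {d : ℕ} {f : WeylAlgebra K n} (hf : f ∈ Pd K n d) : f ∈ RpolySet K n :=
  Pd_le_adjoin d hf

lemma list_of_range {l : List (WeylAlgebra K n)}
    (hl : ∀ y ∈ l, y ∈ Set.range fun i : Fin n => Wx K i) :
    ∃ l' : List (Fin n), l = l'.map (Wx K) := by
  induction l with
  | nil => exact ⟨[], rfl⟩
  | cons a t ih =>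
    obtain ⟨l', rfl⟩ := ih (fun y hy => hl y (List.mem_cons_of_mem a hy))
    obtain ⟨i, rfl⟩ := hl a (by simp)
    exact ⟨i :: l', rfl⟩

/-- decomposition of an element of `R` into homogeneous components. -/
lemma R_decomp {r : WeylAlgebra K n} (hr : r ∈ RpolySet K n) :
    ∃ N : ℕ, ∃ f : ℕ → WeylAlgebra K n, (∀ d, f d ∈ Pd K n d) ∧
      (∀ d, N ≤ d → f d = 0) ∧ r = ∑ d ∈ Finset.range N, f d := by
  classical
  have hr' : r ∈ Submodule.span K ((Submonoid.closure (Set.range fun i : Fin n => Wx K i) :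
      Submonoid (WeylAlgebra K n)) : Set (WeylAlgebra K n)) := by
    rw [← Algebra.adjoin_eq_span]
    exact hr
  clear hr
  induction hr' using Submodule.span_induction with
  | mem x hx =>
    obtain ⟨l, hl, rfl⟩ := Submonoid.exists_list_of_mem_closure hx
    obtain ⟨l', rfl⟩ := list_of_range hl
    refine ⟨l'.length + 1, fun d => if d = l'.length then (l'.map (Wx K)).prod else 0,
      fun d => ?_, fun d hd => ?_, ?_⟩
    · rcases eq_or_ne d l'.length with rfl | hd
      · simpa using mono_mem (K := K) l'
      · simp only [if_neg hd]; exact (Pd K n d).zero_mem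
    · have hne : d ≠ l'.length := by omega
      simp only [if_neg hne]
    · rw [Finset.sum_ite_eq' (Finset.range (l'.length + 1)) l'.length, if_pos]
      simp
  | zero => exact ⟨0, 0, by simp, by simp, by simp⟩
  | add x y _ _ hx hy =>
    obtain ⟨N, f, hf1, hf2, rfl⟩ := hx
    obtain ⟨N', f', hf'1, hf'2, rfl⟩ := hy
    refine ⟨max N N', f + f', fun d => add_mem (hf1 d) (hf'1 d), fun d hd => ?_, ?_⟩
    · simp only [Pi.add_apply, hf2 d (le_trans (le_max_left _ _) hd),
        hf'2 d (le_trans (le_max_right _ _) hd), add_zero]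
    · rw [show (∑ d ∈ Finset.range (N ⊔ N'), (f + f') d)
          = (∑ d ∈ Finset.range (N ⊔ N'), f d) + (∑ d ∈ Finset.range (N ⊔ N'), f' d) by
        simp [Finset.sum_add_distrib]]
      congr 1
      · exact Finset.sum_subset (Finset.range_subset_range.mpr (le_max_left _ _))
          (fun d _ hd => hf2 d (by simpa using hd))
      · exact Finset.sum_subset (Finset.range_subset_range.mpr (le_max_right _ _))
          (fun d _ hd => hf'2 d (by simpa using hd))
  | smul c x _ hx =>
    obtain ⟨N, f, hf1, hf2, rfl⟩ := hx
    exact ⟨N, c • f, fun d => Submodule.smul_mem _ _ (hf1 d),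
      fun d hd => by simp [hf2 d hd], by simp [Finset.smul_sum]⟩

/-! ### module structure -/

noncomputable instance gwmModK (M : GWM K n) : Module K M.carrier :=
  Module.compHom M.carrier (algebraMap K (WeylAlgebra K n))

lemma k_smul_def (M : GWM K n) (c : K) (x : M.carrier) :
    c • x = algebraMap K (WeylAlgebra K n) c • x := rfl

instance (M : GWM K n) : IsScalarTower K (WeylAlgebra K n) M.carrier :=
  ⟨fun c w x => by
    rw [Algebra.smul_def, mul_smul]
    rfl⟩

/-- the graded pieces as `K`-submodules. -/
noncomputable def degS (M : GWM K n) (j : ℤ) : Submodule K M.carrier where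
  carrier := M.deg j
  add_mem' := (M.deg j).add_mem
  zero_mem' := (M.deg j).zero_mem
  smul_mem' := fun c x hx => M.k_smul c j x hx

lemma mem_degS {M : GWM K n} {j : ℤ} {x : M.carrier} : x ∈ degS M j ↔ x ∈ M.deg j := Iff.rfl

lemma homog_smul_mem (M : GWM K n) {d : ℕ} {f : WeylAlgebra K n} (hf : f ∈ Pd K n d)
    {j : ℤ} {x : M.carrier} (hx : x ∈ M.deg j) : f • x ∈ M.deg (j + d) := by
  induction hf using Submodule.span_induction generalizing j x with
  | mem w hw =>
    obtain ⟨l, hl, rfl⟩ := hw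
    subst hl
    induction l generalizing j x with
    | nil => simpa using hx
    | cons a t ih =>
      have h1 : ((a :: t).map (Wx K)).prod • x = Wx K a • ((t.map (Wx K)).prod • x) := by
        rw [List.map_cons, List.prod_cons, mul_smul]
      rw [h1]
      have h2 := M.x_smul a _ _ (ih hx)
      have h3 : j + (t.length : ℤ) + 1 = j + ((a :: t).length : ℤ) := by
        simp only [List.length_cons]
        push_cast
        ring
      rwa [h3] at h2
  | zero => simpa using (M.deg (j + d)).zero_mem
  | add f g _ _ hf hg => rw [add_smul]; exact (M.deg _).add_mem (hf hx) (hg hx)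
  | smul c f _ hf =>
    rw [smul_assoc, k_smul_def]
    exact M.k_smul c _ _ (hf hx)
/-! ### projections onto graded components -/

instance (M : GWM K n) : SMulCommClass K (WeylAlgebra K n) M.carrier :=
  ⟨fun c w x => by
    rw [k_smul_def, ← mul_smul, Algebra.commutes c w, mul_smul]
    rfl⟩

noncomputable def gEquiv (M : GWM K n) :
    (DirectSum ℤ fun j => ↥(M.deg j)) ≃+ M.carrier :=
  { Equiv.ofBijective _ M.isInternal with
    map_add' := fun a b => map_add (DirectSum.coeAddMonoidHom M.deg) a b }

lemma gEquiv_apply (M : GWM K n) (x : DirectSum ℤ fun j => ↥(M.deg j)) :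
    gEquiv M x = DirectSum.coeAddMonoidHom M.deg x := rfl

/-- projection on the degree-`j` component, as an additive map. -/
noncomputable def proj (M : GWM K n) (j : ℤ) : M.carrier →+ M.carrier where
  toFun x := ((gEquiv M).symm x j : M.carrier)
  map_zero' := by
    dsimp only
    rw [map_zero]
    simp
  map_add' a b := by
    dsimp only
    rw [map_add]
    simp [DirectSum.add_apply]

lemma proj_apply (M : GWM K n) (j : ℤ) (x : M.carrier) :
    proj M j x = ((gEquiv M).symm x j : M.carrier) := rfl

lemma proj_mem (M : GWM K n) (j : ℤ) (x : M.carrier) : proj M j x ∈ M.deg j :=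
  ((gEquiv M).symm x j).2

lemma proj_of_mem (M : GWM K n) {j j' : ℤ} {x : M.carrier} (hx : x ∈ M.deg j') :
    proj M j x = if j = j' then x else 0 := by
  have h1 : gEquiv M (DirectSum.of (fun j => ↥(M.deg j)) j' ⟨x, hx⟩) = x := by
    rw [gEquiv_apply]
    exact DirectSum.coeAddMonoidHom_of M.deg j' ⟨x, hx⟩
  have h2 : (gEquiv M).symm x = DirectSum.of (fun j => ↥(M.deg j)) j' ⟨x, hx⟩ :=
    (AddEquiv.symm_apply_eq _).mpr h1.symm
  rw [proj_apply, h2]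
  rcases eq_or_ne j j' with rfl | hne
  · rw [if_pos rfl, DirectSum.of_eq_same]
  · rw [if_neg hne, DirectSum.of_eq_of_ne j' j _ hne]
    rfl

lemma proj_of_mem_same (M : GWM K n) {j : ℤ} {x : M.carrier} (hx : x ∈ M.deg j) :
    proj M j x = x := by
  rw [proj_of_mem M hx, if_pos rfl]

lemma proj_of_mem_ne (M : GWM K n) {j j' : ℤ} (hne : j ≠ j') {x : M.carrier}
    (hx : x ∈ M.deg j') : proj M j x = 0 := by
  rw [proj_of_mem M hx, if_neg hne]

lemma proj_sum (M : GWM K n) (x : M.carrier) :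
    ∃ T : Finset ℤ, (∀ j, j ∉ T → proj M j x = 0) ∧ ∑ j ∈ T, proj M j x = x := by
  classical
  refine ⟨((gEquiv M).symm x).support, fun j hj => ?_, ?_⟩
  · rw [proj_apply]
    rw [DFinsupp.notMem_support_iff.mp hj]
    rfl
  · have h1 := DirectSum.sum_support_of ((gEquiv M).symm x)
    have h2 := congrArg (gEquiv M) h1
    rw [AddEquiv.apply_symm_apply, map_sum] at h2
    calc ∑ j ∈ ((gEquiv M).symm x).support, proj M j x
        = ∑ j ∈ ((gEquiv M).symm x).support,
            gEquiv M (DirectSum.of (fun j => ↥(M.deg j)) j (((gEquiv M).symm x) j)) := by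
          refine Finset.sum_congr rfl fun j _ => ?_
          rw [gEquiv_apply, DirectSum.coeAddMonoidHom_of]
          rfl
      _ = x := h2

lemma proj_ksmul (M : GWM K n) (j : ℤ) (c : K) (x : M.carrier) :
    proj M j (c • x) = c • proj M j x := by
  obtain ⟨T, hT0, hT1⟩ := proj_sum M x
  conv_lhs => rw [← hT1]
  rw [Finset.smul_sum, map_sum]
  have h1 : ∀ j' ∈ T, proj M j (c • proj M j' x)
      = if j = j' then c • proj M j' x else 0 := by
    intro j' _
    refine proj_of_mem M ?_
    rw [k_smul_def]
    exact M.k_smul c j' _ (proj_mem M j' x)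
  rw [Finset.sum_congr rfl h1, Finset.sum_ite_eq T j (fun j' => c • proj M j' x)]
  by_cases hj : j ∈ T
  · rw [if_pos hj]
  · rw [if_neg hj, hT0 j hj, smul_zero]

/-! ### the Euler-operator step -/

lemma euler_smul (M : GWM K n) (x : M.carrier) :
    weylEuler K n • x = ∑ i : Fin n, Wx K i • (Wd K i • x) := by
  rw [weylEuler, Finset.sum_smul]
  exact Finset.sum_congr rfl fun i _ => mul_smul _ _ _

lemma euler_smul_mem (M : GWM K n) {j : ℤ} {x : M.carrier} (hx : x ∈ M.deg j) :
    weylEuler K n • x ∈ M.deg j := by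
  rw [euler_smul]
  apply AddSubgroup.sum_mem
  intro i _
  have h1 := M.x_smul i (j - 1) _ (M.d_smul i j x hx)
  rwa [sub_add_cancel] at h1

/-- int-cast scalars act within each degree. -/
lemma intcast_smul_mem (M : GWM K n) (q : ℤ) {j : ℤ} {x : M.carrier} (hx : x ∈ M.deg j) :
    ((q : ℤ) : WeylAlgebra K n) • x ∈ M.deg j := by
  rw [Int.cast_smul_eq_zsmul]
  exact AddSubgroup.zsmul_mem _ hx q

lemma cast_smul_eq_zero {q : ℤ} (hq : q ≠ 0) [CharZero K] (M : GWM K n) {x : M.carrier}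
    (h : ((q : ℤ) : WeylAlgebra K n) • x = 0) : x = 0 := by
  have h1 : ((q : ℤ) : WeylAlgebra K n) = algebraMap K (WeylAlgebra K n) ((q : ℤ) : K) := by
    rw [map_intCast]
  rw [h1, ← k_smul_def] at h
  have h2 : ((q : ℤ) : K) ≠ 0 := Int.cast_ne_zero.mpr hq
  calc x = ((q : ℤ) : K)⁻¹ • (((q : ℤ) : K) • x) := by
        rw [smul_smul, inv_mul_cancel₀ h2, one_smul]
    _ = 0 := by rw [h, smul_zero]

/-- key lemma: a nonzero-degree homogeneous element of a generalized Eulerian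
module is a sum of `X_i • (degree one lower)`. -/
lemma eulerStep [CharZero K] (M : GWM K n) (hM : M.IsGenEulerian) {j : ℤ} (hj : j ≠ 0)
    {x : M.carrier} (hx : x ∈ M.deg j) :
    ∃ y : Fin n → M.carrier, (∀ i, y i ∈ M.deg (j - 1)) ∧ x = ∑ i : Fin n, Wx K i • y i := by
  obtain ⟨a, _, hkill⟩ := hM j x hx
  -- write (E - j)^a = E * q + (-j)^a with q acting degree-preservingly
  have main : ∀ a : ℕ, ∃ q : WeylAlgebra K n,
      (weylEuler K n - (j : WeylAlgebra K n)) ^ a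
        = weylEuler K n * q + ((((-j) ^ a : ℤ) : WeylAlgebra K n)) ∧
      (∀ (j' : ℤ) (z : M.carrier), z ∈ M.deg j' → q • z ∈ M.deg j') := by
    intro a
    induction a with
    | zero => exact ⟨0, by simp, fun j' z hz => by simpa using (M.deg j').zero_mem⟩
    | succ a ih =>
      obtain ⟨q, hq1, hq2⟩ := ih
      refine ⟨q * weylEuler K n - q * (j : WeylAlgebra K n) + (((-j) ^ a : ℤ) : WeylAlgebra K n),
        ?_, ?_⟩
      · have hcomm : (((-j) ^ a : ℤ) : WeylAlgebra K n) * weylEuler K n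
            = weylEuler K n * (((-j) ^ a : ℤ) : WeylAlgebra K n) :=
          (Int.cast_commute _ _).eq
        have hj2 : (((-j) ^ a : ℤ) : WeylAlgebra K n) * (j : WeylAlgebra K n)
            = -(((-j) ^ (a + 1) : ℤ) : WeylAlgebra K n) := by
          rw [← Int.cast_mul, ← Int.cast_neg]
          congr 1
          ring
        rw [pow_succ, hq1, mul_sub, add_mul, add_mul, hcomm, hj2, mul_add, mul_sub,
          ← mul_assoc, ← mul_assoc]
        abel
      · intro j' z hz
        have m1 : (q * weylEuler K n) • z ∈ M.deg j' := by
          rw [mul_smul]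
          exact hq2 j' _ (euler_smul_mem M hz)
        have m2 : (q * (j : WeylAlgebra K n)) • z ∈ M.deg j' := by
          rw [mul_smul]
          exact hq2 j' _ (intcast_smul_mem M j hz)
        rw [add_smul, sub_smul]
        exact AddSubgroup.add_mem _ (AddSubgroup.sub_mem _ m1 m2)
          (intcast_smul_mem M _ hz)
  obtain ⟨q, hq1, hq2⟩ := main a
  rw [hq1, add_smul, mul_smul] at hkill
  -- so ((-j)^a) • x = - E • (q • x)
  have hc : ((-j) ^ a : ℤ) ≠ 0 := pow_ne_zero _ (neg_ne_zero.mpr hj)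
  have hcK : (((-j) ^ a : ℤ) : K) ≠ 0 := Int.cast_ne_zero.mpr hc
  set u : M.carrier := q • x with hu
  have hkill' : ((((-j) ^ a : ℤ) : WeylAlgebra K n)) • x = - (weylEuler K n • u) := by
    rw [eq_neg_iff_add_eq_zero, add_comm]
    exact hkill
  have hxeq : x = (((-j) ^ a : ℤ) : K)⁻¹ • (((((-j) ^ a : ℤ) : WeylAlgebra K n)) • x) := by
    have h1 : ((((-j) ^ a : ℤ) : WeylAlgebra K n)) • x = (((-j) ^ a : ℤ) : K) • x := by
      rw [k_smul_def, map_intCast]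
    rw [h1, smul_smul, inv_mul_cancel₀ hcK, one_smul]
  refine ⟨fun i => (((-j) ^ a : ℤ) : K)⁻¹ • (-(Wd K i • u)), fun i => ?_, ?_⟩
  · dsimp only
    rw [k_smul_def]
    exact M.k_smul _ _ _ (AddSubgroup.neg_mem _ (M.d_smul i j u (hq2 j x hx)))
  · dsimp only
    rw [hxeq, hkill', euler_smul, ← Finset.sum_neg_distrib, Finset.smul_sum]
    refine Finset.sum_congr rfl fun i _ => ?_
    simp only [smul_neg]
    rw [smul_comm]
lemma xMonomials_finite (d : ℕ) : (xMonomials K n d).Finite := by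
  apply Set.Finite.subset
    (Set.finite_range (fun t : Fin d → Fin n => ((List.ofFn t).map (Wx K)).prod))
  rintro w ⟨l, hl, rfl⟩
  subst hl
  exact ⟨l.get, by dsimp only; rw [List.ofFn_get]⟩

lemma nsmul_cancel [CharZero K] {a : ℕ} (ha : a ≠ 0) {w : WeylAlgebra K n}
    (h : a • w = 0) : w = 0 := by
  have h1 : ((a : K)) • w = 0 := by rw [Nat.cast_smul_eq_nsmul]; exact h
  have h2 : (a : K) ≠ 0 := Nat.cast_ne_zero.mpr ha
  calc w = (a : K)⁻¹ • ((a : K) • w) := by rw [smul_smul, inv_mul_cancel₀ h2, one_smul]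
    _ = 0 := by rw [h1, smul_zero]

lemma mem_RpolySet_iff {x : WeylAlgebra K n} :
    x ∈ RpolySet K n ↔ x ∈ Algebra.adjoin K (Set.range fun i : Fin n => Wx K i) :=
  Iff.rfl

end WeylProof

open WeylProof

/-- Let `M` be a generalized Eulerian `A_n(K)`-module which is finitely
generated as a module over `R = K[X_1, …, X_n] ⊆ A_n(K)`.  Then `M = 0` or `M ≅ R^m` as
graded `R`-modules for some `m ≥ 1` (i.e. `M` is free over `R` on `m` homogeneous
generators of degree `0`). -/
theorem generalizedEulerian_finite_over_R_is_free
    (K : Type) [Field K] [CharZero K] (n : ℕ)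
    (M : GWM K n) (hM : M.IsGenEulerian)
    (hfg : ∃ (p : ℕ) (g : Fin p → M.carrier),
      AddSubgroup.closure {x : M.carrier | ∃ r ∈ RpolySet K n, ∃ i, x = r • g i} = ⊤) :
    (∀ m : M.carrier, m = 0) ∨
    ∃ m : ℕ, 1 ≤ m ∧ ∃ b : Fin m → M.carrier,
      (∀ i, b i ∈ M.deg 0) ∧
      AddSubgroup.closure {x : M.carrier | ∃ r ∈ RpolySet K n, ∃ i, x = r • b i} = ⊤ ∧
      (∀ r : Fin m → WeylAlgebra K n, (∀ i, r i ∈ RpolySet K n) →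
        (∑ i, r i • b i) = 0 → ∀ i, r i = 0) := by
  classical
  by_cases htriv : ∀ m : M.carrier, m = 0
  · exact Or.inl htriv
  right
  push_neg at htriv
  obtain ⟨m0, hm0⟩ := htriv
  obtain ⟨p, g, hgen⟩ := hfg
  -- components of the generators
  choose T hT0 hT1 using fun i => proj_sum M (g i)
  set S : Finset ℤ := Finset.univ.biUnion T with hS
  set s : ℤ := if h : S.Nonempty then S.min' h else 0 with hs
  have hsle : ∀ (i : Fin p) (j : ℤ), j ∈ T i → s ≤ j := by
    intro i j hj
    have hjS : j ∈ S := Finset.mem_biUnion.mpr ⟨i, Finset.mem_univ i, hj⟩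
    have hne : S.Nonempty := ⟨j, hjS⟩
    rw [hs, dif_pos hne]
    exact S.min'_le j hjS
  -- Claim A : components in low degrees vanish
  have claimA : ∀ j : ℤ, j < s → ∀ x : M.carrier, proj M j x = 0 := by
    intro j hj x
    have hker : AddSubgroup.closure {x : M.carrier | ∃ r ∈ RpolySet K n, ∃ i, x = r • g i}
        ≤ (proj M j).ker := by
      rw [AddSubgroup.closure_le]
      rintro z ⟨r, hr, i, rfl⟩
      simp only [SetLike.mem_coe, AddMonoidHom.mem_ker]
      obtain ⟨N, f, hf1, hf2, rfl⟩ := R_decomp hr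
      rw [Finset.sum_smul, map_sum]
      refine Finset.sum_eq_zero fun d _ => ?_
      conv_lhs => rw [← hT1 i, Finset.smul_sum]
      rw [map_sum]
      refine Finset.sum_eq_zero fun j' hj' => ?_
      have hmem : f d • proj M j' (g i) ∈ M.deg (j' + d) :=
        homog_smul_mem M (hf1 d) (proj_mem M j' (g i))
      refine proj_of_mem_ne M ?_ hmem
      have := hsle i j' hj'
      omega
    rw [hgen] at hker
    exact hker (AddSubgroup.mem_top x)
  -- Claim B : negative degrees vanish
  have claimBaux : ∀ (k : ℕ) (j : ℤ), j < 0 → j < s + k → ∀ x ∈ M.deg j, x = 0 := by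
    intro k
    induction k with
    | zero =>
      intro j hj0 hjs x hx
      have h1 := claimA j (by simpa using hjs) x
      rwa [proj_of_mem_same M hx] at h1
    | succ k ih =>
      intro j hj0 hjs x hx
      by_cases hlt : j < s + k
      · exact ih j hj0 hlt x hx
      · obtain ⟨y, hy, hxe⟩ := eulerStep M hM (by omega : j ≠ 0) hx
        rw [hxe]
        refine Finset.sum_eq_zero fun i _ => ?_
        rw [ih (j - 1) (by omega) (by push_cast at hjs ⊢; omega) (y i) (hy i), smul_zero]
  have claimB : ∀ (j : ℤ), j < 0 → ∀ x ∈ M.deg j, x = 0 := by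
    intro j hj x hx
    refine claimBaux ((j - s).toNat + 1) j hj (by push_cast; omega) x hx
  -- Claim C : nonnegative degrees are generated by degree-0 elements
  have claimC : ∀ (d : ℕ) (x : M.carrier), x ∈ M.deg (d : ℤ) →
      x ∈ AddSubgroup.closure
        {z : M.carrier | ∃ f ∈ Pd K n d, ∃ v ∈ M.deg 0, z = f • v} := by
    intro d
    induction d with
    | zero =>
      intro x hx
      exact AddSubgroup.subset_closure
        ⟨1, one_mem_Pd_zero, x, by simpa using hx, (one_smul _ _).symm⟩
    | succ d ih =>
      intro x hx
      have hd : ((d + 1 : ℕ) : ℤ) ≠ 0 := by exact_mod_cast Nat.succ_ne_zero d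
      obtain ⟨y, hy, hxe⟩ := eulerStep M hM hd hx
      have hy' : ∀ i, y i ∈ M.deg (d : ℤ) := by
        intro i
        have hcast : ((d + 1 : ℕ) : ℤ) - 1 = (d : ℤ) := by push_cast; ring
        have := hy i
        rwa [hcast] at this
      rw [hxe]
      have hmono : ∀ z : M.carrier,
          z ∈ AddSubgroup.closure {z : M.carrier | ∃ f ∈ Pd K n d, ∃ v ∈ M.deg 0, z = f • v} →
          ∀ i : Fin n, Wx K i • z ∈ AddSubgroup.closure
            {z : M.carrier | ∃ f ∈ Pd K n (d + 1), ∃ v ∈ M.deg 0, z = f • v} := by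
        intro z hz
        induction hz using AddSubgroup.closure_induction with
        | mem z hzz =>
          intro i
          obtain ⟨f, hf, v, hv, rfl⟩ := hzz
          rw [← mul_smul]
          exact AddSubgroup.subset_closure ⟨Wx K i * f, x_mul_mem i hf, v, hv, rfl⟩
        | zero => intro i; rw [smul_zero]; exact AddSubgroup.zero_mem _
        | add a c _ _ ha hc => intro i; rw [smul_add]; exact AddSubgroup.add_mem _ (ha i) (hc i)
        | neg a _ ha => intro i; rw [smul_neg]; exact AddSubgroup.neg_mem _ (ha i)
      exact AddSubgroup.sum_mem _ fun i _ => hmono (y i) (ih (y i) (hy' i)) i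
  -- the span of the degree-0 part
  set gensV : Set M.carrier := ⋃ i : Fin p, ⋃ j' ∈ (T i : Set ℤ),
      (fun w => proj M 0 (w • proj M j' (g i))) '' xMonomials K n ((-j').toNat) with hgensV
  have hgensV_fin : gensV.Finite :=
    Set.finite_iUnion fun i => Set.Finite.biUnion (T i).finite_toSet
      (fun j' _ => Set.Finite.image _ (xMonomials_finite ((-j').toNat)))
  set V : Submodule K M.carrier := Submodule.span K gensV with hV
  have hVfd : FiniteDimensional K V := FiniteDimensional.span_of_finite K hgensV_fin
  have hproj0 : ∀ (d : ℕ) (f : WeylAlgebra K n), f ∈ Pd K n d → ∀ (i : Fin p) (j' : ℤ),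
      j' ∈ T i → proj M 0 (f • proj M j' (g i)) ∈ V := by
    intro d f hf i j' hj'
    induction hf using Submodule.span_induction with
    | mem w hw =>
      by_cases hd : d = (-j').toNat
      · subst hd
        refine Submodule.subset_span ?_
        refine Set.mem_iUnion.mpr ⟨i, ?_⟩
        exact Set.mem_biUnion (Finset.mem_coe.mpr hj') ⟨w, hw, rfl⟩
      · have hne : (0 : ℤ) ≠ j' + d := by
          intro hcontra
          apply hd
          omega
        rw [proj_of_mem_ne M hne
          (homog_smul_mem M (Submodule.subset_span hw) (proj_mem M j' (g i)))]
        exact V.zero_mem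
    | zero => rw [zero_smul, map_zero]; exact V.zero_mem
    | add x y _ _ hx hy => rw [add_smul, map_add]; exact V.add_mem hx hy
    | smul c x _ hx => rw [smul_assoc, proj_ksmul]; exact V.smul_mem c hx
  have hspan0 : degS M 0 ≤ V := by
    intro x hx
    have hx0 : proj M 0 x = x := proj_of_mem_same M hx
    have hsub : AddSubgroup.closure {x : M.carrier | ∃ r ∈ RpolySet K n, ∃ i, x = r • g i}
        ≤ (V.toAddSubgroup).comap (proj M 0) := by
      rw [AddSubgroup.closure_le]
      rintro z ⟨r, hr, i, rfl⟩
      simp only [SetLike.mem_coe, AddSubgroup.mem_comap]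
      obtain ⟨N, f, hf1, hf2, rfl⟩ := R_decomp hr
      rw [Finset.sum_smul, map_sum]
      refine Submodule.sum_mem V fun d _ => ?_
      have hrepr : proj M 0 (f d • g i) = ∑ j' ∈ T i, proj M 0 (f d • proj M j' (g i)) := by
        conv_lhs => rw [← hT1 i, Finset.smul_sum]
        rw [map_sum]
      rw [hrepr]
      exact Submodule.sum_mem V fun j' hj' => hproj0 d (f d) (hf1 d) i j' hj'
    rw [hgen] at hsub
    have := hsub (AddSubgroup.mem_top x)
    rw [AddSubgroup.mem_comap] at this
    rwa [hx0] at this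
  have hfd0 : FiniteDimensional K ↥(degS M 0) := Submodule.finiteDimensional_of_le hspan0
  -- a nonzero element of degree 0
  have hv0 : ∃ v : M.carrier, v ∈ M.deg 0 ∧ v ≠ 0 := by
    obtain ⟨T0, hT00, hT01⟩ := proj_sum M m0
    have hex : ∃ j, proj M j m0 ≠ 0 := by
      by_contra hcon
      push_neg at hcon
      exact hm0 (by rw [← hT01]; exact Finset.sum_eq_zero fun j _ => hcon j)
    obtain ⟨j0, hj0⟩ := hex
    by_contra hcon
    push_neg at hcon
    rcases lt_trichotomy j0 0 with h | h | h
    · exact hj0 (claimB j0 h _ (proj_mem M j0 m0))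
    · exact hj0 (hcon _ (h ▸ proj_mem M j0 m0))
    · have hx : proj M j0 m0 ∈ M.deg ((j0.toNat : ℕ) : ℤ) := by
        rw [Int.toNat_of_nonneg (le_of_lt h)]
        exact proj_mem M j0 m0
      have hcc := claimC j0.toNat _ hx
      have hbot : AddSubgroup.closure
          {z : M.carrier | ∃ f ∈ Pd K n j0.toNat, ∃ v ∈ M.deg 0, z = f • v} ≤ ⊥ := by
        rw [AddSubgroup.closure_le]
        rintro z ⟨f, hf, v, hv, rfl⟩
        have : v = 0 := hcon v hv
        simp [this]
      exact hj0 (hbot hcc)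
  obtain ⟨v0, hv0m, hv0ne⟩ := hv0
  have hnt : Nontrivial ↥(degS M 0) :=
    ⟨⟨v0, hv0m⟩, 0, by simp [Subtype.ext_iff, hv0ne]⟩
  set m : ℕ := Module.finrank K ↥(degS M 0) with hm
  have hm1 : 1 ≤ m := Module.finrank_pos_iff.mpr hnt
  set B := Module.finBasis K ↥(degS M 0) with hB
  set b : Fin m → M.carrier := fun i => ((B i : ↥(degS M 0)) : M.carrier) with hb
  have hbdeg : ∀ i, b i ∈ M.deg 0 := fun i => (B i).2
  have hbli : LinearIndependent K b :=
    B.linearIndependent.map' (degS M 0).subtype (Submodule.ker_subtype _)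
  have hbspan : Submodule.span K (Set.range b) = degS M 0 := by
    have h1 : Set.range b = (degS M 0).subtype '' Set.range ⇑B := by
      rw [← Set.range_comp]
      rfl
    rw [h1, ← Submodule.map_span, B.span_eq, Submodule.map_subtype_top]
  refine ⟨m, hm1, b, hbdeg, ?_, ?_⟩
  · -- generation
    rw [eq_top_iff]
    intro x _
    obtain ⟨Tx, hTx0, hTx1⟩ := proj_sum M x
    rw [← hTx1]
    refine AddSubgroup.sum_mem _ fun j _ => ?_
    rcases lt_or_ge j 0 with hj | hj
    · rw [claimB j hj _ (proj_mem M j x)]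
      exact AddSubgroup.zero_mem _
    · have hx : proj M j x ∈ M.deg ((j.toNat : ℕ) : ℤ) := by
        rw [Int.toNat_of_nonneg hj]
        exact proj_mem M j x
      have hcc := claimC j.toNat _ hx
      have hle : AddSubgroup.closure
          {z : M.carrier | ∃ f ∈ Pd K n j.toNat, ∃ v ∈ M.deg 0, z = f • v}
          ≤ AddSubgroup.closure {x : M.carrier | ∃ r ∈ RpolySet K n, ∃ i, x = r • b i} := by
        rw [AddSubgroup.closure_le]
        rintro z ⟨f, hf, v, hv, rfl⟩
        have hvs : v ∈ Submodule.span K (Set.range b) := by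
          rw [hbspan]
          exact hv
        obtain ⟨c, hc⟩ := (Submodule.mem_span_range_iff_exists_fun K).mp hvs
        have hfc : f • v = ∑ l, (f * algebraMap K (WeylAlgebra K n) (c l)) • b l := by
          rw [← hc, Finset.smul_sum]
          refine Finset.sum_congr rfl fun l _ => ?_
          rw [k_smul_def, ← mul_smul]
        rw [hfc]
        refine AddSubgroup.sum_mem _ fun l _ => ?_
        refine AddSubgroup.subset_closure ⟨f * algebraMap K (WeylAlgebra K n) (c l), ?_, l, rfl⟩
        exact mem_RpolySet_iff.mpr
          (Subalgebra.mul_mem _ (mem_R_of_Pd hf) (Subalgebra.algebraMap_mem _ _))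
      exact hle hcc
  · -- independence
    intro r hrR hr0
    choose N f hf1 hf2 hf3 using fun i => R_decomp (hrR i)
    set NN : ℕ := Finset.univ.sup N with hNN
    have hri : ∀ i, r i = ∑ d ∈ Finset.range NN, f i d := by
      intro i
      rw [hf3 i]
      exact Finset.sum_subset
        (Finset.range_subset_range.mpr (Finset.le_sup (Finset.mem_univ i)))
        (fun d _ hd => hf2 i d (by simpa using hd))
    have hz : ∀ d : ℕ, (∑ i, f i d • b i) ∈ M.deg (d : ℤ) := by
      intro d
      refine AddSubgroup.sum_mem _ fun i _ => ?_
      have := homog_smul_mem M (hf1 i d) (hbdeg i)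
      rwa [zero_add] at this
    have htot : ∑ d ∈ Finset.range NN, (∑ i, f i d • b i) = 0 := by
      have h1 : ∑ i, r i • b i = ∑ d ∈ Finset.range NN, ∑ i, f i d • b i := by
        rw [← Finset.sum_comm]
        refine Finset.sum_congr rfl fun i _ => ?_
        rw [hri i, Finset.sum_smul]
      rw [← h1, hr0]
    have hzd : ∀ d ∈ Finset.range NN, (∑ i, f i d • b i) = 0 := by
      intro d0 hd0
      have h4 := congrArg (proj M (d0 : ℤ)) htot
      rw [map_sum, map_zero] at h4
      have h5 : ∀ d ∈ Finset.range NN, proj M (d0 : ℤ) (∑ i, f i d • b i)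
          = if d0 = d then (∑ i, f i d • b i) else 0 := by
        intro d _
        rw [proj_of_mem M (hz d)]
        congr 1
        simp [Nat.cast_inj]
      rw [Finset.sum_congr rfl h5, Finset.sum_ite_eq _ d0, if_pos hd0] at h4
      exact h4
    have claimI : ∀ (d : ℕ) (ff : Fin m → WeylAlgebra K n), (∀ i, ff i ∈ Pd K n d) →
        (∑ i, ff i • b i) = 0 → ∀ i, ff i = 0 := by
      intro d
      induction d with
      | zero =>
        intro ff hfP hfz i
        choose c hc using fun i => Pd_zero_eq (hfP i)
        have hsum : ∑ i, c i • b i = 0 := by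
          rw [← hfz]
          refine Finset.sum_congr rfl fun i _ => ?_
          rw [hc i, ← k_smul_def]
        have hci := Fintype.linearIndependent_iff.mp hbli c hsum
        rw [hc i, hci i, map_zero]
      | succ d ih =>
        intro ff hfP hfz i
        choose gg hg1 hg2 hg3 using fun i => poly_deriv (hfP i)
        have hgz : ∀ k : Fin n, ∑ i, gg i k • b i = 0 := by
          intro k
          have h5 : Wd K k • (∑ i, ff i • b i) = 0 := by rw [hfz, smul_zero]
          rw [Finset.smul_sum] at h5
          have h6 : ∀ i, Wd K k • (ff i • b i) = ff i • (Wd K k • b i) + gg i k • b i := by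
            intro i'
            rw [← mul_smul, hg2 i' k, add_smul, mul_smul]
          rw [Finset.sum_congr rfl (fun i' _ => h6 i')] at h5
          have h7 : ∀ i' : Fin m, Wd K k • b i' = 0 := fun i' =>
            claimB (0 - 1) (by omega) _ (M.d_smul k 0 (b i') (hbdeg i'))
          simp only [h7, smul_zero, zero_add] at h5
          exact h5
        have hggz : ∀ i' k, gg i' k = 0 := fun i' k =>
          ih (fun i'' => gg i'' k) (fun i'' => hg1 i'' k) (hgz k) i'
        have h8 : (d + 1) • ff i = 0 := by
          rw [← hg3 i]
          exact Finset.sum_eq_zero fun k _ => by rw [hggz i k, mul_zero]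
        exact nsmul_cancel (Nat.succ_ne_zero d) h8
    intro i
    rw [hri i]
    exact Finset.sum_eq_zero fun d hd =>
      claimI d (fun i' => f i' d) (fun i' => hf1 i' d) (hzd d hd) i
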